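/- arXiv:2004.04896 — 4 statements merged into one kernel-verified Lean document; each statement's English description precedes it below -/
import Mathlib

section
/- Compatibility of guarded 1-sender (broadcast) transitions satisfying the strong guard-compatibility condition: let f : S → S be the receive map with matrix M, sender moving from s₁ to s₁' (so v = e_{s₁}, v' = e_{s₁'}), G ⊆ S the guard, and 𝒢 a family of guards. Assume that for every G' ∈ 𝒢, if s₁' ∈ G' then f(s) ∈ G' for all s ∈ G. Suppose q ⊴ p (q ⪯ p and supp(q) ⊆ G'' ↔ supp(p) ⊆ G'' for all G'' ∈ 𝒢), the transition is enabled from q (e_{s₁} ⪯ q and supp(q) ⊆ G), and q' = M·(q − e_{s₁}) + e_{s₁'}. Then the transition is enabled from p, and the successor p' = M·(p − e_{s₁}) + e_{s₁'} satisfies q' ⊴ p'. -/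
/-- Compatibility of guarded broadcast (1-sender) transitions satisfying the
strong guard-compatibility condition: if `q ⊴ p` and the transition is enabled
from `q`, then it is enabled from `p` and the successors satisfy `q' ⊴ p'`. -/
theorem stmt_9 (S : Type*) [Fintype S] [DecidableEq S]
    (f : S → S) (s₁ s₁' : S) (G : Set S) (𝒢 : Set (Set S)) (hG : G ∈ 𝒢)
    (q p : S → ℕ)
    -- strong guard-compatibility (C1): if the sender moves into a guard,
    -- then every receiver in `G` moves into that guard
    (hcomp : ∀ G' ∈ 𝒢, s₁' ∈ G' → ∀ s ∈ G, f s ∈ G')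
    -- q ⊴ p
    (hle : ∀ s, q s ≤ p s)
    (hguards : ∀ G'' ∈ 𝒢, ({s : S | 0 < q s} ⊆ G'' ↔ {s : S | 0 < p s} ⊆ G''))
    -- the transition is enabled from q
    (hsend : (if s₁ = s₁ then 1 else 0) ≤ q s₁)
    (henab : {s : S | 0 < q s} ⊆ G)
    -- successors
    (q' p' : S → ℕ)
    (hq' : ∀ s, q' s = (∑ t, (if f t = s then 1 else 0) *
              (q t - (if t = s₁ then 1 else 0))) + (if s = s₁' then 1 else 0))
    (hp' : ∀ s, p' s = (∑ t, (if f t = s then 1 else 0) *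
              (p t - (if t = s₁ then 1 else 0))) + (if s = s₁' then 1 else 0)) :
    -- the transition is enabled from p, and q' ⊴ p'
    (1 ≤ p s₁) ∧ ({s : S | 0 < p s} ⊆ G) ∧
    (∀ s, q' s ≤ p' s) ∧
    (∀ G' ∈ 𝒢, ({s : S | 0 < q' s} ⊆ G' ↔ {s : S | 0 < p' s} ⊆ G')) := by
  have hq1 : 1 ≤ q s₁ := by simpa using hsend
  have hpG : {s : S | 0 < p s} ⊆ G := (hguards G hG).mp henab
  refine ⟨le_trans hq1 (hle s₁), hpG, ?_, ?_⟩
  · intro s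
    rw [hq', hp']
    gcongr with t _
    exact hle t
  · intro G' hG'
    have key : ∀ (r r' : S → ℕ),
        (∀ s, r' s = (∑ t, (if f t = s then 1 else 0) *
            (r t - (if t = s₁ then 1 else 0))) + (if s = s₁' then 1 else 0)) →
        ({s : S | 0 < r s} ⊆ G) →
        ({s : S | 0 < r' s} ⊆ G' ↔ s₁' ∈ G') := by
      intro r r' hr' hrG
      constructor
      · intro h
        apply h
        show 0 < r' s₁'
        rw [hr']
        simp
      · intro h1 s hs
        have hf := hcomp G' hG' h1
        have hs' : 0 < r' s := hs
        rw [hr'] at hs'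
        by_cases hss : s = s₁'
        · exact hss ▸ h1
        · simp only [hss, if_false, add_zero] at hs'
          obtain ⟨t, -, ht⟩ := Finset.exists_ne_zero_of_sum_ne_zero hs'.ne'
          have ht' : (if f t = s then 1 else 0) * (r t - if t = s₁ then 1 else 0) ≠ 0 := ht
          by_cases hft : f t = s
          · simp only [hft, if_true, one_mul] at ht'
            have hrt : 0 < r t := lt_of_lt_of_le (Nat.pos_of_ne_zero ht') (Nat.sub_le _ _)
            exact hft ▸ hf t (hrG hrt)
          · simp [hft] at ht'
    rw [key q q' hq' henab, key p p' hp' hpG]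
end

section
/- Predecessor computation for k-sender transitions preserves upward-closedness modulo the enabling condition: let M be an S × S matrix with unit-vector columns arising from a bijective-free receive map f, and v, v' ∈ ℕ^S. If C ⊆ ℕ^S is upward closed, then the set Pred(C) = {q | v ⪯ q ∧ M·(q − v) + v' ∈ C} is upward closed with respect to ⪯. -/
/-- Predecessor computation for k-sender transitions preserves
upward-closedness: if `C` is upward closed then so is
`Pred(C) = {q | v ⪯ q ∧ M·(q − v) + v' ∈ C}`. -/
theorem stmt_12 (S : Type*) [Fintype S] [DecidableEq S] (f : S → S)
    (v v' : S → ℕ) (C : Set (S → ℕ))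
    (hC : ∀ q ∈ C, ∀ p : S → ℕ, (∀ s, q s ≤ p s) → p ∈ C) :
    ∀ q ∈ {q : S → ℕ | (∀ s, v s ≤ q s) ∧
        (fun s => (∑ t, (if f t = s then 1 else 0) * (q t - v t)) + v' s) ∈ C},
      ∀ p : S → ℕ, (∀ s, q s ≤ p s) →
        p ∈ {q : S → ℕ | (∀ s, v s ≤ q s) ∧
        (fun s => (∑ t, (if f t = s then 1 else 0) * (q t - v t)) + v' s) ∈ C} := by
  rintro q ⟨hvq, hqC⟩ p hqp
  refine ⟨fun s => le_trans (hvq s) (hqp s), hC _ hqC _ fun s => ?_⟩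
  gcongr with t _
  exact hqp t
end

section
/- Simulation monotonicity for unguarded GSP systems (system-size monotonicity): for an unguarded GSP with k-sender transitions only, if state q' is reachable from initial state n·e_{s₀} in the system of size n, then for every n' ≥ n there exists a reachable state p' in the system of size n' with q' ⪯ p'. -/
/-- System-size monotonicity for unguarded GSPs with k-sender transitions
only: if `q'` is reachable from the size-`n` initial state, then for every
`n' ≥ n` some reachable state `p'` of the size-`n'` system satisfies
`q' ⪯ p'`. -/
theorem stmt_14 (S : Type*) [Fintype S] [DecidableEq S] (s₀ : S)
    (A : Type*) (M : A → S → S → ℕ) (v v' : A → S → ℕ)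
    (hcol : ∀ a, ∀ t : S, ∃! s : S, M a s t = 1 ∧ ∀ s' ≠ s, M a s' t = 0)
    (hsum : ∀ a, (∑ s, v a s) = ∑ s, v' a s)
    (step : (S → ℕ) → (S → ℕ) → Prop)
    (hstep : ∀ q q', step q q' ↔ ∃ a, (∀ s, v a s ≤ q s) ∧
        q' = fun s => (∑ t, M a s t * (q t - v a t)) + v' a s)
    (n : ℕ) (q' : S → ℕ)
    (hreach : Relation.ReflTransGen step (fun s => if s = s₀ then n else 0) q') :
    ∀ n' ≥ n, ∃ p' : S → ℕ,
      Relation.ReflTransGen step (fun s => if s = s₀ then n' else 0) p' ∧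
      ∀ s, q' s ≤ p' s := by
  intro n' hn'
  induction hreach with
  | refl =>
    exact ⟨_, Relation.ReflTransGen.refl, fun s => by beta_reduce; split_ifs <;> omega⟩
  | tail h hq ih =>
    obtain ⟨p, hp, hle⟩ := ih
    obtain ⟨a, hva, hq'⟩ := (hstep _ _).1 hq
    refine ⟨_, hp.tail ((hstep _ _).2 ⟨a, fun s => (hva s).trans (hle s), rfl⟩), ?_⟩
    intro s; subst hq'; simp only
    gcongr with t _
    exact hle t
end

section
/- Cutoff soundness for internal-and-negotiation-only well-behaved protocols (downward direction): in a system whose global transitions either move exactly one process along a local transition (internal) or move every process s ↦ f(s) for a common map f (negotiation), if from the size-n initial state n·e_{s₀} a state q with q(s) ≥ m is reachable, and m ≤ n, then from the size-m initial state m·e_{s₀} a state q̃ with q̃(s) ≥ m is reachable, provided all guards are trivial (no guard restricts transitions). Formally: projecting a run onto any chosen subset of m processes whose final local state is s yields a valid run of the size-m system reaching m processes in s. -/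
/-- Splitting lemma: if `k ≤ ∑ b` over a finset, we can find `g ≤ b` with `∑ g = k`. -/
lemma exists_le_sum_aux {α : Type*} [DecidableEq α] (s : Finset α) (b : α → ℕ) :
    ∀ k : ℕ, k ≤ ∑ a ∈ s, b a →
      ∃ g : α → ℕ, (∀ a ∈ s, g a ≤ b a) ∧ ∑ a ∈ s, g a = k := by
  induction s using Finset.induction with
  | empty => intro k hk; simp at hk; exact ⟨fun _ => 0, by simp, by simp [hk]⟩
  | @insert a s ha ih =>
    intro k hk
    rw [Finset.sum_insert ha] at hk
    obtain ⟨g, hg1, hg2⟩ := ih (k - min k (b a)) (by omega)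
    refine ⟨fun x => if x = a then min k (b a) else g x, ?_, ?_⟩
    · intro x hx
      rcases Finset.mem_insert.mp hx with h | h
      · subst h; simp
      · have : x ≠ a := fun he => ha (he ▸ h)
        simp [this]; exact hg1 x h
    · rw [Finset.sum_insert ha]
      rw [if_pos rfl]
      have hmin : min k (b a) ≤ k := min_le_left _ _
      have : ∑ x ∈ s, (if x = a then min k (b a) else g x) = ∑ x ∈ s, g x := by
        apply Finset.sum_congr rfl
        intro x hx
        have : x ≠ a := fun he => ha (he ▸ hx)
        simp [this]
      rw [this, hg2]; omega

/-- Cutoff soundness (downward direction) for unguarded systems with only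
internal transitions and negotiations: if the size-`n` system reaches a state
with at least `m` processes in `s` and `m ≤ n`, then the size-`m` system
reaches a state with at least `m` processes in `s`. -/
theorem stmt_19 (S : Type*) [Fintype S] [DecidableEq S] (s₀ s : S)
    (T : Set (S × S)) (F : Set (S → S))
    (step : (S → ℕ) → (S → ℕ) → Prop)
    (hstep : ∀ q q', step q q' ↔
      ((∃ tr ∈ T, 1 ≤ q tr.1 ∧
          q' = fun u => q u - (if u = tr.1 then 1 else 0)
                          + (if u = tr.2 then 1 else 0)) ∨
       (∃ f ∈ F, q' = fun u => ∑ t ∈ Finset.univ.filter (fun t => f t = u), q t)))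
    (n m : ℕ) (hmn : m ≤ n) (q : S → ℕ)
    (hreach : Relation.ReflTransGen step (fun u => if u = s₀ then n else 0) q)
    (hq : m ≤ q s) :
    ∃ q' : S → ℕ,
      Relation.ReflTransGen step (fun u => if u = s₀ then m else 0) q' ∧
      m ≤ q' s := by
  classical
  suffices h : ∀ qt : S → ℕ, (∀ u, qt u ≤ q u) → (∑ u, qt u = m) →
      Relation.ReflTransGen step (fun u => if u = s₀ then m else 0) qt by
    refine ⟨fun u => if u = s then m else 0, h _ ?_ ?_, by simp⟩
    · intro u; by_cases hu : u = s
      · subst hu; simpa using hq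
      · simp [hu]
    · simp
  clear hq
  induction hreach with
  | refl =>
    intro qt hle hsum
    have hz : ∀ u, u ≠ s₀ → qt u = 0 := by
      intro u hu
      have := hle u
      simp [hu] at this
      exact this
    have hs0 : qt s₀ = m := by
      rw [← hsum, Finset.sum_eq_single s₀]
      · intro u _ hu; exact hz u hu
      · simp
    have : qt = fun u => if u = s₀ then m else 0 := by
      funext u
      by_cases hu : u = s₀
      · subst hu; simp [hs0]
      · simp [hu, hz u hu]
    rw [this]
  | @tail b c hab hbc ih =>
    intro qt hle hsum
    rw [hstep] at hbc
    rcases hbc with ⟨tr, htr, h1, heq⟩ | ⟨f, hf, heq⟩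
    · -- internal transition
      obtain ⟨t, t'⟩ := tr
      simp only at heq h1
      by_cases htt : t = t'
      · subst htt
        have hcb : c = b := by
          funext u
          rw [heq]
          by_cases hu : u = t
          · subst hu; simp; omega
          · simp [hu]
        exact ih qt (fun u => (hcb ▸ hle u)) hsum
      · by_cases hqt : qt t' ≤ b t'
        · apply ih qt ?_ hsum
          intro u
          by_cases hu : u = t'
          · subst hu; exact hqt
          · have := hle u
            rw [heq] at this
            by_cases hut : u = t
            · subst hut; simp [hu, htt] at this; omega
            · simpa [hu, hut] using this
        · push_neg at hqt
          have hc : c t' = b t' + 1 := by rw [heq]; simp [htt, Ne.symm htt]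
          have hqt1 : 1 ≤ qt t' := by have := hle t'; omega
          set qs : S → ℕ := fun u => qt u + (if u = t then 1 else 0)
              - (if u = t' then 1 else 0) with hqs
          have hqs_t : qs t = qt t + 1 := by simp [hqs, htt]
          have hqs_t' : qs t' = qt t' - 1 := by simp [hqs, Ne.symm htt]
          have hqs_o : ∀ u, u ≠ t → u ≠ t' → qs u = qt u := by
            intro u h1 h2; simp [hqs, h1, h2]
          have hle' : ∀ u, qs u ≤ b u := by
            intro u
            have hcu := hle u
            rw [heq] at hcu
            by_cases h1 : u = t
            · subst h1; rw [hqs_t]; simp [htt] at hcu; omega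
            · by_cases h2 : u = t'
              · rw [h2, hqs_t']; have h3 := hle t'; rw [hc] at h3; omega
              · rw [hqs_o u h1 h2]; simp [h1, h2] at hcu; omega
          have hsum' : ∑ u, qs u = m := by
            have key : ∀ u, qs u + (if u = t' then 1 else 0)
                = qt u + (if u = t then 1 else 0) := by
              intro u
              by_cases h1 : u = t
              · subst h1; simp [hqs_t, htt]
              · by_cases h2 : u = t'
                · subst h2; simp [hqs_t', Ne.symm htt]; omega
                · simp [hqs_o u h1 h2, h1, h2]
            have := Finset.sum_congr rfl (fun u (_ : u ∈ Finset.univ) => key u)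
            rw [Finset.sum_add_distrib, Finset.sum_add_distrib] at this
            simp [Finset.sum_ite_eq'] at this
            omega
          have hstep' : step qs qt := by
            rw [hstep]
            left
            refine ⟨(t, t'), htr, by simp [hqs_t], ?_⟩
            funext u
            by_cases h1 : u = t
            · subst h1; simp [hqs_t, htt]
            · by_cases h2 : u = t'
              · subst h2; simp [hqs_t', Ne.symm htt]; omega
              · simp [hqs_o u h1 h2, h1, h2]
          exact (ih qs hle' hsum').tail hstep'
    · -- negotiation
      have hk : ∀ u, qt u ≤ ∑ t ∈ Finset.univ.filter (fun t => f t = u), b t := by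
        intro u; have := hle u; rw [heq] at this; exact this
      choose g hg1 hg2 using fun u =>
        exists_le_sum_aux (Finset.univ.filter (fun t => f t = u)) b (qt u) (hk u)
      set qs : S → ℕ := fun t => g (f t) t with hqs
      have hle' : ∀ u, qs u ≤ b u := by
        intro u
        exact hg1 (f u) u (by simp)
      have hpush : ∀ u, ∑ t ∈ Finset.univ.filter (fun t => f t = u), qs t = qt u := by
        intro u
        rw [← hg2 u]
        apply Finset.sum_congr rfl
        intro x hx
        simp at hx
        simp [hqs, hx]
      have hsum' : ∑ u, qs u = m := by
        rw [← hsum, ← Finset.sum_fiberwise_of_maps_to (g := f) (fun x _ => Finset.mem_univ (f x)) qs]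
        exact Finset.sum_congr rfl (fun u _ => hpush u)
      have hstep' : step qs qt := by
        rw [hstep]
        right
        exact ⟨f, hf, funext fun u => (hpush u).symm⟩
      exact (ih qs hle' hsum').tail hstep'
end
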